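/- Let α be a linearly ordered type, T a finitely branching tree over α, [T] its set of infinite branches, < the lexicographic order, and T' = {v ∈ T : v < P for every P ∈ [T]}. If T is infinite, then T' is infinite. -/

import Mathlib

/-- `T` is a tree over `α`: a set of finite words closed under taking prefixes. -/
def IsTree {α : Type*} (T : Set (List α)) : Prop :=
  ∀ t ∈ T, ∀ s : List α, s <+: t → s ∈ T

/-- `T` is finitely branching: each node has only finitely many children. -/
def FinitelyBranching {α : Type*} (T : Set (List α)) : Prop :=
  ∀ t ∈ T, {a : α | t ++ [a] ∈ T}.Finite

/-- `P : ℕ → α` is an infinite branch of `T`: all of its finite initial segments lie in `T`. -/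
def IsBranch {α : Type*} (T : Set (List α)) (P : ℕ → α) : Prop :=
  ∀ n : ℕ, (List.ofFn fun i : Fin n => P i) ∈ T

/-- A node `v` is lexicographically below a branch `P` iff `v < w` for some finite
prefix `w` of `P`. -/
def NodeLtBranch {α : Type*} [LinearOrder α] (v : List α) (P : ℕ → α) : Prop :=
  ∃ n : ℕ, List.Lex (· < ·) v (List.ofFn fun i : Fin n => P i)

/-- `T' = {v ∈ T : v < P for every infinite branch P of T}`. -/
def Tprime {α : Type*} [LinearOrder α] (T : Set (List α)) : Set (List α) :=
  {v ∈ T | ∀ P : ℕ → α, IsBranch T P → NodeLtBranch v P}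

theorem lexAppendLeft {α : Type*} [LT α] (u : List α) {s t : List α}
    (h : List.Lex (· < ·) s t) : List.Lex (· < ·) (u ++ s) (u ++ t) := by
  induction u with
  | nil => simpa
  | cons a u ih => exact List.Lex.cons ih

theorem lexPrefix {α : Type*} [LT α] (l : List α) (a : α) (s : List α) :
    List.Lex (· < ·) l (l ++ a :: s) := by
  induction l with
  | nil => exact List.Lex.nil
  | cons b l ih => exact List.Lex.cons ih

theorem lexAppend {α : Type*} [LT α] : ∀ {s t : List α}, List.Lex (· < ·) s t →
    s.length = t.length → ∀ s' t' : List α, List.Lex (· < ·) (s ++ s') (t ++ t')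
  | _, _, List.Lex.nil, hl, _, _ => by simp at hl
  | _, _, List.Lex.rel h, _, _, _ => List.Lex.rel h
  | _, _, List.Lex.cons h, hl, s', t' =>
      List.Lex.cons (lexAppend h (by simpa using hl) s' t')

theorem konigStep {α : Type*} [LinearOrder α] {T : Set (List α)}
    (hT : IsTree T) (hFB : FinitelyBranching T) {v : List α}
    (hv : {t ∈ T | v <+: t}.Infinite) :
    ∃ a, (v ++ [a] ∈ T ∧ {t ∈ T | v ++ [a] <+: t}.Infinite) ∧
      ∀ b, v ++ [b] ∈ T → {t ∈ T | v ++ [b] <+: t}.Infinite → a ≤ b := by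
  obtain ⟨t0, ht0⟩ := hv.nonempty
  have hvT : v ∈ T := hT t0 ht0.1 v ht0.2
  have hch : {a : α | v ++ [a] ∈ T}.Finite := hFB v hvT
  have hS : ({t ∈ T | v <+: t} \ {v}).Infinite := hv.diff (Set.finite_singleton v)
  have hsub : ({t ∈ T | v <+: t} \ {v}) ⊆
      ⋃ a ∈ {a : α | v ++ [a] ∈ T}, {t ∈ T | v ++ [a] <+: t} := by
    rintro t ⟨⟨htT, ⟨r, rfl⟩⟩, hne⟩
    match r with
    | [] => exact absurd (by simp) hne
    | a :: r' =>
      have hpre : v ++ [a] <+: v ++ a :: r' := ⟨r', by simp⟩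
      have haT : v ++ [a] ∈ T := hT _ htT _ hpre
      exact Set.mem_biUnion haT ⟨htT, hpre⟩
  have hex : ∃ a, v ++ [a] ∈ T ∧ {t ∈ T | v ++ [a] <+: t}.Infinite := by
    by_contra hcon
    push_neg at hcon
    have : (⋃ a ∈ {a : α | v ++ [a] ∈ T}, {t ∈ T | v ++ [a] <+: t}).Finite :=
      hch.biUnion fun a ha => hcon a ha
    exact hS (this.subset hsub)
  have hBfin : {a : α | v ++ [a] ∈ T ∧ {t ∈ T | v ++ [a] <+: t}.Infinite}.Finite :=
    hch.subset fun a ha => ha.1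
  obtain ⟨a, haB, hmin⟩ := Set.exists_min_image _ id hBfin ⟨hex.choose, hex.choose_spec⟩
  exact ⟨a, haB, fun b hb1 hb2 => hmin b ⟨hb1, hb2⟩⟩

/-- If `T` is infinite then `T'` is infinite. -/
theorem Tprime_infinite {α : Type*} [LinearOrder α] (T : Set (List α))
    (hT : IsTree T) (hFB : FinitelyBranching T) (hinf : T.Infinite) :
    (Tprime T).Infinite := by
  classical
  have hNE : Nonempty α := by
    obtain ⟨t, ht⟩ := (hinf.diff (Set.finite_singleton [])).nonempty
    match t, ht with
    | [], ⟨_, h⟩ => exact absurd rfl h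
    | a :: _, _ => exact ⟨a⟩
  choose! f hf using fun v (hv : {t ∈ T | v <+: t}.Infinite) => konigStep hT hFB hv
  let v : ℕ → List α := fun n => Nat.rec [] (fun _ l => l ++ [f l]) n
  have hv0 : v 0 = [] := rfl
  have hvs : ∀ n, v (n + 1) = v n ++ [f (v n)] := fun n => rfl
  have hInf : ∀ n, {t ∈ T | v n <+: t}.Infinite := by
    intro n
    induction n with
    | zero =>
      have : {t ∈ T | v 0 <+: t} = T := by
        ext t; simp [hv0, List.nil_prefix]
      rw [this]; exact hinf
    | succ n ih => rw [hvs]; exact (hf (v n) ih).1.2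
  have hvT : ∀ n, v n ∈ T := fun n => by
    obtain ⟨t, ht⟩ := (hInf n).nonempty
    exact hT t ht.1 _ ht.2
  have hlen : ∀ n, (v n).length = n := by
    intro n; induction n with
    | zero => rfl
    | succ n ih => rw [hvs]; simp [ih]
  have hmem : ∀ n, v n ∈ Tprime T := by
    intro n
    refine ⟨hvT n, ?_⟩
    intro P hP
    set w : ℕ → List α := fun m => List.ofFn fun i : Fin m => P i with hwdef
    have hw : ∀ m, w (m + 1) = w m ++ [P m] := by
      intro m
      simp only [hwdef, List.ofFn_succ', List.concat_eq_append, Fin.coe_castSucc, Fin.val_last]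
    have hwlen : ∀ m, (w m).length = m := fun m => by simp [hwdef]
    have hwmono : ∀ m k, m ≤ k → w m <+: w k := by
      intro m k hmk
      induction k, hmk using Nat.le_induction with
      | base => exact List.prefix_rfl
      | succ k hmk ih => rw [hw]; exact ih.trans (List.prefix_append _ _)
    have hwInf : ∀ m, {t ∈ T | w m <+: t}.Infinite := by
      intro m
      apply Set.infinite_of_injective_forall_mem (f := fun k : ℕ => w (k + m))
      · intro a b hab
        have := congrArg List.length hab
        simpa [hwlen] using this
      · intro k; exact ⟨hP _, hwmono m (k + m) (Nat.le_add_left m k)⟩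
    have claim : ∀ m, v m = w m ∨ List.Lex (· < ·) (v m) (w m) := by
      intro m
      induction m with
      | zero => left; simp [hv0, hwdef]
      | succ m ih =>
        rcases ih with heq | hlex
        · have h1 : v m ++ [P m] ∈ T := by rw [heq, ← hw]; exact hP (m + 1)
          have h2 : {t ∈ T | v m ++ [P m] <+: t}.Infinite := by
            rw [heq, ← hw]; exact hwInf (m + 1)
          have hle : f (v m) ≤ P m := (hf (v m) (hInf m)).2 _ h1 h2
          rcases eq_or_lt_of_le hle with heq2 | hlt
          · left; rw [hvs, hw, heq2, heq]
          · right
            rw [hvs, hw, ← heq]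
            exact lexAppendLeft (v m) (List.Lex.rel hlt)
        · right
          rw [hvs, hw]
          exact lexAppend hlex (by rw [hlen, hwlen]) _ _
    rcases claim n with heq | hlex
    · refine ⟨n + 1, ?_⟩
      show List.Lex (· < ·) (v n) (w (n + 1))
      rw [hw, heq]
      exact lexPrefix (w n) (P n) []
    · exact ⟨n, hlex⟩
  apply Set.infinite_of_injective_forall_mem (f := fun n : ℕ => v n)
  · intro a b hab
    have := congrArg List.length hab
    simpa [hlen] using this
  · exact hmem
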